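/- arXiv:2102.12834 — 2 statements merged into one kernel-verified Lean document; each statement's English description precedes it below -/
import Mathlib

section
/- Monotonicity of the Opinion-Dependent Reproduction Number: for opinion vectors o(t₀), o(t₁) ∈ [−0.5, 0.5]^n, if o(t₀) ≤ o(t₁) entrywise, then R^o_{t₀} ≥ R^o_{t₁}, where R^o_t = ρ(D(o(t))^{−1} B(o(t))) is the spectral radius of D(o(t))^{−1} B(o(t)); conversely, if o(t₀) ≥ o(t₁) entrywise, then R^o_{t₀} ≤ R^o_{t₁}. -/
open Matrix Filter Set

noncomputable section

/-- The modified sign function: `1` if `0 ≤ x`, `-1` otherwise. -/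
def sgnm (x : ℝ) : ℝ := if 0 ≤ x then 1 else -1

/-- Gauge transformation matrix `Φ(o) = diag(sgnm o₁, …, sgnm oₙ)`. -/
def gaugeMat {n : ℕ} (o : Fin n → ℝ) : Matrix (Fin n) (Fin n) ℝ :=
  Matrix.diagonal fun i => sgnm (o i)

/-- Graph Laplacian of a nonnegative adjacency matrix with zero diagonal. -/
def lapOf {n : ℕ} (A : Matrix (Fin n) (Fin n) ℝ) : Matrix (Fin n) (Fin n) ℝ :=
  Matrix.diagonal (fun i => ∑ j, A i j) - A

/-- Irreducibility of a (nonnegative) matrix: between any two indices some power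
has a strictly positive entry. -/
def MatIrreducible {n : ℕ} (M : Matrix (Fin n) (Fin n) ℝ) : Prop :=
  ∀ i j : Fin n, ∃ k : ℕ, 1 ≤ k ∧ 0 < (M ^ k) i j

/-- Spectral radius of a real square matrix, as the largest modulus of a complex
eigenvalue. -/
def specRad {m : Type*} [Fintype m] [DecidableEq m] (A : Matrix m m ℝ) : ℝ :=
  sSup ((fun z => ‖z‖) '' spectrum ℂ (A.map (algebraMap ℝ ℂ)))

/-- Spectral abscissa of a real square matrix, as the largest real part of a
complex eigenvalue. -/
def specAbs {m : Type*} [Fintype m] [DecidableEq m] (A : Matrix m m ℝ) : ℝ :=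
  sSup (Complex.re '' spectrum ℂ (A.map (algebraMap ℝ ℂ)))

/-- A real square matrix is Hurwitz if all its (complex) eigenvalues have
negative real part. -/
def IsHurwitz {m : Type*} [Fintype m] [DecidableEq m] (A : Matrix m m ℝ) : Prop :=
  ∀ z ∈ spectrum ℂ (A.map (algebraMap ℝ ℂ)), z.re < 0

/-- The data of the coupled networked SIS epidemic–opinion model over `n`
communities. -/
structure EpiOpModel (n : ℕ) where
  /-- healing rates -/
  δ : Fin n → ℝ
  /-- minimum healing rate -/
  δmin : ℝ
  /-- minimum infection rate -/
  βmin : ℝ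
  /-- unweighted adjacency matrix `Ã` of the (strongly connected) epidemic graph -/
  Atil : Matrix (Fin n) (Fin n) ℝ
  /-- infection matrix `B = [β_ij]` -/
  B : Matrix (Fin n) (Fin n) ℝ
  /-- nonnegative adjacency matrix `Ā_u` of the (strongly connected) opinion graph -/
  Au : Matrix (Fin n) (Fin n) ℝ
  δmin_pos : 0 < δmin
  δ_ge : ∀ i, δmin ≤ δ i
  βmin_pos : 0 < βmin
  Atil_01 : ∀ i j, Atil i j = 0 ∨ Atil i j = 1
  Atil_diag : ∀ i, Atil i i = 0
  B_edge : ∀ i j, Atil i j = 1 → βmin ≤ B i j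
  B_off : ∀ i j, Atil i j = 0 → B i j = 0
  B_irred : MatIrreducible B
  Au_nonneg : ∀ i j, 0 ≤ Au i j
  Au_diag : ∀ i, Au i i = 0
  Au_irred : MatIrreducible Au

namespace EpiOpModel

/-- The state space `[0,1]^n × [−0.5, 0.5]^n`. -/
def InBox {n : ℕ} (_M : EpiOpModel n) (x o : Fin n → ℝ) : Prop :=
  (∀ i, x i ∈ Set.Icc (0:ℝ) 1) ∧ (∀ i, o i ∈ Set.Icc (-(1/2) : ℝ) (1/2))

variable {n : ℕ} (M : EpiOpModel n)

/-- `B_min = β_min Ã`. -/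
def Bmin : Matrix (Fin n) (Fin n) ℝ := M.βmin • M.Atil

/-- `D = diag(δ₁, …, δₙ)`. -/
def Dmax : Matrix (Fin n) (Fin n) ℝ := Matrix.diagonal M.δ

/-- `D_min = δ_min I`. -/
def Dmin : Matrix (Fin n) (Fin n) ℝ := M.δmin • (1 : Matrix (Fin n) (Fin n) ℝ)

/-- Opinion-dependent healing matrix `D(o) = D_min + (D − D_min)(O + 0.5 I)`. -/
def Dmat (o : Fin n → ℝ) : Matrix (Fin n) (Fin n) ℝ :=
  Matrix.diagonal fun i => M.δmin + (M.δ i - M.δmin) * (o i + 1/2)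

/-- Opinion-dependent infection matrix `B(o) = B − (O + 0.5 I)(B − B_min)`. -/
def Bmat (o : Fin n → ℝ) : Matrix (Fin n) (Fin n) ℝ :=
  Matrix.of fun i j => M.B i j - (o i + 1/2) * (M.B i j - M.Bmin i j)

/-- Laplacian `L̄_u` of the opinion adjacency matrix. -/
def Lu : Matrix (Fin n) (Fin n) ℝ := lapOf M.Au

/-- Signed opinion Laplacian `Φ(o) L̄_u Φ(o)`. -/
def Lsgn (o : Fin n → ℝ) : Matrix (Fin n) (Fin n) ℝ :=
  gaugeMat o * M.Lu * gaugeMat o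

/-- Epidemic vector field `ẋ = −D(o)x + (I − X)B(o)x`. -/
def fx (x o : Fin n → ℝ) : Fin n → ℝ :=
  -(M.Dmat o).mulVec x +
    (Matrix.diagonal fun i => 1 - x i).mulVec ((M.Bmat o).mulVec x)

/-- Opinion vector field `ȯ = x − (Φ(o) L̄_u Φ(o) + I) o − 0.5 e`. -/
def fo (x o : Fin n → ℝ) : Fin n → ℝ :=
  x - (M.Lsgn o + 1).mulVec o - (fun _ => (1/2 : ℝ))

/-- Equilibria of the coupled system. -/
def IsEquilibrium (x o : Fin n → ℝ) : Prop := M.fx x o = 0 ∧ M.fo x o = 0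

/-- Trajectories (solutions) of the coupled system. -/
def IsTrajectory (x o : ℝ → Fin n → ℝ) : Prop :=
  ∀ t : ℝ, ∀ i : Fin n,
    HasDerivAt (fun s => x s i) (M.fx (x t) (o t) i) t ∧
    HasDerivAt (fun s => o s i) (M.fo (x t) (o t) i) t

/-- The Opinion-Dependent Reproduction Number `R^o = ρ(D(o)⁻¹ B(o))`. -/
def Rnum (o : Fin n → ℝ) : ℝ := specRad ((M.Dmat o)⁻¹ * M.Bmat o)

/-- `R_max = ρ(D_min⁻¹ B)`. -/
def Rmax : ℝ := specRad (M.Dmin⁻¹ * M.B)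

/-- `R_min = ρ(D⁻¹ B_min)`. -/
def Rmin : ℝ := specRad (M.Dmax⁻¹ * M.Bmin)

/-- `W(o) = −D(o) + B(o)`. -/
def Wmat (o : Fin n → ℝ) : Matrix (Fin n) (Fin n) ℝ := -(M.Dmat o) + M.Bmat o

/-- Jacobian matrix of the coupled system evaluated at a healthy equilibrium
`(0, o)`: block lower triangular with diagonal blocks `W(o)` and
`−(Φ(o) L̄_u Φ(o) + I)`. -/
def JacHealthy (o : Fin n → ℝ) : Matrix (Fin n ⊕ Fin n) (Fin n ⊕ Fin n) ℝ :=
  Matrix.fromBlocks (M.Wmat o) 0 1 (-(M.Lsgn o + 1))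

/-- Lyapunov stability of an equilibrium of the coupled system. -/
def LyapunovStable (xe oe : Fin n → ℝ) : Prop :=
  ∀ ε > 0, ∃ δ > 0, ∀ x o : ℝ → Fin n → ℝ, M.IsTrajectory x o →
    dist (x 0, o 0) (xe, oe) < δ → ∀ t ≥ 0, dist (x t, o t) (xe, oe) < ε

/-- Local exponential stability of an equilibrium of the coupled system. -/
def LocExpStable (xe oe : Fin n → ℝ) : Prop :=
  ∃ δ > 0, ∃ C > 0, ∃ α > 0, ∀ x o : ℝ → Fin n → ℝ, M.IsTrajectory x o →
    dist (x 0, o 0) (xe, oe) < δ →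
    ∀ t ≥ 0, dist (x t, o t) (xe, oe) ≤
      C * Real.exp (-α * t) * dist (x 0, o 0) (xe, oe)

end EpiOpModel

open scoped NNReal ENNReal

namespace SpecRadAux

attribute [local instance] Matrix.linftyOpNormedRing Matrix.linftyOpNormedAlgebra
  Matrix.linftyOpNormedSpace

variable {n : ℕ}

instance : CompleteSpace (Matrix (Fin n) (Fin n) ℂ) :=
  by infer_instance

lemma pow_entry_nonneg_le {A B : Matrix (Fin n) (Fin n) ℝ}
    (hA : ∀ i j, 0 ≤ A i j) (hB : ∀ i j, 0 ≤ B i j) (hAB : ∀ i j, A i j ≤ B i j) :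
    ∀ k i j, 0 ≤ (A ^ k) i j ∧ (A ^ k) i j ≤ (B ^ k) i j := by
  intro k
  induction k with
  | zero =>
    intro i j
    simp only [pow_zero, Matrix.one_apply]
    split <;> simp
  | succ k ih =>
    intro i j
    rw [pow_succ, pow_succ, Matrix.mul_apply, Matrix.mul_apply]
    constructor
    · exact Finset.sum_nonneg fun l _ => mul_nonneg (ih i l).1 (hA l j)
    · exact Finset.sum_le_sum fun l _ =>
        mul_le_mul (ih i l).2 (hAB l j) (hA l j) (le_trans (ih i l).1 (ih i l).2)

lemma nnnorm_map_le {A B : Matrix (Fin n) (Fin n) ℝ}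
    (hA : ∀ i j, 0 ≤ A i j) (hAB : ∀ i j, A i j ≤ B i j) :
    ‖A.map (algebraMap ℝ ℂ)‖₊ ≤ ‖B.map (algebraMap ℝ ℂ)‖₊ := by
  rw [Matrix.linfty_opNNNorm_def, Matrix.linfty_opNNNorm_def]
  refine Finset.sup_mono_fun fun i _ => Finset.sum_le_sum fun j _ => ?_
  have h1 : ∀ (x : ℝ), ‖(algebraMap ℝ ℂ) x‖₊ = ‖x‖₊ := by
    intro x
    ext
    simp [Real.norm_eq_abs]
  rw [Matrix.map_apply, Matrix.map_apply, h1, h1]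
  have := hA i j
  have := hAB i j
  rw [← NNReal.coe_le_coe]
  simp only [coe_nnnorm, Real.norm_eq_abs]
  rw [abs_of_nonneg ‹0 ≤ A i j›, abs_of_nonneg (le_trans ‹0 ≤ A i j› ‹A i j ≤ B i j›)]
  exact ‹A i j ≤ B i j›

lemma specRad_le_specRad {A B : Matrix (Fin n) (Fin n) ℝ}
    (hA : ∀ i j, 0 ≤ A i j) (hB : ∀ i j, 0 ≤ B i j) (hAB : ∀ i j, A i j ≤ B i j) :
    specRad A ≤ specRad B := by
  rcases Nat.eq_zero_or_pos n with hn | hn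
  · subst hn
    have hempty : ∀ (C : Matrix (Fin 0) (Fin 0) ℝ),
        spectrum ℂ (C.map (algebraMap ℝ ℂ)) = ∅ := by
      intro C
      refine Set.eq_empty_of_forall_notMem fun z hz => ?_
      rw [spectrum.mem_iff] at hz
      exact hz (isUnit_of_subsingleton _)
    simp [specRad, hempty]
  haveI : Nonempty (Fin n) := ⟨⟨0, hn⟩⟩
  set A' := A.map (algebraMap ℝ ℂ) with hA'
  set B' := B.map (algebraMap ℝ ℂ) with hB'
  -- spectral radius of B' as sup over nonempty compact spectrum
  obtain ⟨w, hw, hweq⟩ := spectrum.exists_nnnorm_eq_spectralRadius B'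
  have hbdd : BddAbove ((fun z => ‖z‖) '' spectrum ℂ B') :=
    ((spectrum.isCompact B').image continuous_norm).bddAbove
  have hwmem : ‖w‖ ≤ specRad B := le_csSup hbdd ⟨w, hw, rfl⟩
  have h0 : (0:ℝ) ≤ specRad B := le_trans (norm_nonneg w) hwmem
  refine Real.sSup_le ?_ h0
  rintro r ⟨z, hz, rfl⟩
  -- key: ‖z‖₊ ≤ spectralRadius ℂ B'
  have key : (‖z‖₊ : ℝ≥0∞) ≤ spectralRadius ℂ B' := by
    refine ge_of_tendsto (spectrum.pow_nnnorm_pow_one_div_tendsto_nhds_spectralRadius B') ?_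
    filter_upwards [eventually_ge_atTop 1] with k hk
    have hzk : z ^ k ∈ spectrum ℂ (A' ^ k) :=
      spectrum.pow_image_subset A' k ⟨z, hz, rfl⟩
    have h1 : ‖z ^ k‖ ≤ ‖A' ^ k‖ := spectrum.norm_le_norm_of_mem hzk
    have h2 : ‖A' ^ k‖₊ ≤ ‖B' ^ k‖₊ := by
      have e1 : A' ^ k = (A ^ k).map (algebraMap ℝ ℂ) := by
        rw [hA', ← RingHom.mapMatrix_apply, ← map_pow, RingHom.mapMatrix_apply]
      have e2 : B' ^ k = (B ^ k).map (algebraMap ℝ ℂ) := by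
        rw [hB', ← RingHom.mapMatrix_apply, ← map_pow, RingHom.mapMatrix_apply]
      rw [e1, e2]
      exact nnnorm_map_le (fun i j => (pow_entry_nonneg_le hA hB hAB k i j).1)
        (fun i j => (pow_entry_nonneg_le hA hB hAB k i j).2)
    have h3 : (‖z‖₊ : ℝ≥0∞) ^ (k : ℕ) ≤ (‖B' ^ k‖₊ : ℝ≥0∞) := by
      have : ‖z ^ k‖₊ ≤ ‖B' ^ k‖₊ := le_trans (by exact_mod_cast h1) h2
      calc (‖z‖₊ : ℝ≥0∞) ^ (k:ℕ) = ((‖z‖₊ ^ k : ℝ≥0) : ℝ≥0∞) := by push_cast; ring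
        _ = (‖z ^ k‖₊ : ℝ≥0∞) := by rw [nnnorm_pow]
        _ ≤ _ := by exact_mod_cast this
    -- take k-th roots
    have hk0 : (0:ℝ) < (k:ℝ) := by exact_mod_cast hk
    calc (‖z‖₊ : ℝ≥0∞) = ((‖z‖₊ : ℝ≥0∞) ^ (k:ℕ)) ^ (1 / (k:ℝ)) := by
          rw [← ENNReal.rpow_natCast, ← ENNReal.rpow_mul, mul_one_div,
            div_self hk0.ne', ENNReal.rpow_one]
      _ ≤ (‖B' ^ k‖₊ : ℝ≥0∞) ^ (1 / (k:ℝ)) :=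
          ENNReal.rpow_le_rpow h3 (by positivity)
  rw [← hweq] at key
  have : ‖z‖₊ ≤ ‖w‖₊ := by exact_mod_cast key
  calc ‖z‖ = ‖z‖ := rfl
    _ ≤ ‖w‖ := this
    _ = ‖w‖ := rfl
    _ ≤ specRad B := hwmem

end SpecRadAux


section RatioAux

variable {n : ℕ}

lemma dEntry_pos (M : EpiOpModel n) (o : Fin n → ℝ)
    (ho : ∀ i, o i ∈ Set.Icc (-(1/2) : ℝ) (1/2)) (i : Fin n) :
    0 < M.δmin + (M.δ i - M.δmin) * (o i + 1/2) := by
  have h1 := (ho i).1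
  have h2 := M.δ_ge i
  have h3 := M.δmin_pos
  nlinarith

lemma Dmat_inv (M : EpiOpModel n) (o : Fin n → ℝ)
    (ho : ∀ i, o i ∈ Set.Icc (-(1/2) : ℝ) (1/2)) :
    (M.Dmat o)⁻¹
      = Matrix.diagonal fun i => (M.δmin + (M.δ i - M.δmin) * (o i + 1/2))⁻¹ := by
  apply Matrix.inv_eq_right_inv
  rw [EpiOpModel.Dmat, Matrix.diagonal_mul_diagonal]
  have h : (fun i => (M.δmin + (M.δ i - M.δmin) * (o i + 1/2))
      * (M.δmin + (M.δ i - M.δmin) * (o i + 1/2))⁻¹) = fun _ => (1:ℝ) :=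
    funext fun i => mul_inv_cancel₀ (dEntry_pos M o ho i).ne'
  rw [h, Matrix.diagonal_one]

lemma ratio_apply (M : EpiOpModel n) (o : Fin n → ℝ)
    (ho : ∀ i, o i ∈ Set.Icc (-(1/2) : ℝ) (1/2)) (i j : Fin n) :
    ((M.Dmat o)⁻¹ * M.Bmat o) i j
      = (M.δmin + (M.δ i - M.δmin) * (o i + 1/2))⁻¹
        * (M.B i j - (o i + 1/2) * (M.B i j - M.βmin * M.Atil i j)) := by
  rw [Dmat_inv M o ho, Matrix.diagonal_mul]
  congr 1

lemma bmin_le (M : EpiOpModel n) (i j : Fin n) :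
    0 ≤ M.βmin * M.Atil i j ∧ M.βmin * M.Atil i j ≤ M.B i j := by
  rcases M.Atil_01 i j with h | h
  · rw [h, M.B_off i j h, mul_zero]; exact ⟨le_refl _, le_refl _⟩
  · rw [h, mul_one]
    exact ⟨M.βmin_pos.le, M.B_edge i j h⟩

lemma ratio_nonneg (M : EpiOpModel n) (o : Fin n → ℝ)
    (ho : ∀ i, o i ∈ Set.Icc (-(1/2) : ℝ) (1/2)) (i j : Fin n) :
    0 ≤ ((M.Dmat o)⁻¹ * M.Bmat o) i j := by
  rw [ratio_apply M o ho i j]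
  obtain ⟨hm0, hmc⟩ := bmin_le M i j
  have ht1 := (ho i).1
  have ht2 := (ho i).2
  have hd := dEntry_pos M o ho i
  have hb : 0 ≤ M.B i j - (o i + 1/2) * (M.B i j - M.βmin * M.Atil i j) := by
    nlinarith
  positivity

lemma ratio_mono (M : EpiOpModel n) (o₀ o₁ : Fin n → ℝ)
    (h₀ : ∀ i, o₀ i ∈ Set.Icc (-(1/2) : ℝ) (1/2))
    (h₁ : ∀ i, o₁ i ∈ Set.Icc (-(1/2) : ℝ) (1/2))
    (hle : ∀ i, o₀ i ≤ o₁ i) (i j : Fin n) :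
    ((M.Dmat o₁)⁻¹ * M.Bmat o₁) i j ≤ ((M.Dmat o₀)⁻¹ * M.Bmat o₀) i j := by
  rw [ratio_apply M o₀ h₀ i j, ratio_apply M o₁ h₁ i j]
  obtain ⟨hm0, hmc⟩ := bmin_le M i j
  have ht01 := (h₀ i).1
  have ht02 := (h₀ i).2
  have ht11 := (h₁ i).1
  have ht12 := (h₁ i).2
  have hd0 := dEntry_pos M o₀ h₀ i
  have hd1 := dEntry_pos M o₁ h₁ i
  have hto := hle i
  have hb1 : 0 ≤ M.B i j - (o₁ i + 1/2) * (M.B i j - M.βmin * M.Atil i j) := by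
    nlinarith
  have hb : M.B i j - (o₁ i + 1/2) * (M.B i j - M.βmin * M.Atil i j)
      ≤ M.B i j - (o₀ i + 1/2) * (M.B i j - M.βmin * M.Atil i j) := by
    nlinarith
  have hdle : M.δmin + (M.δ i - M.δmin) * (o₀ i + 1/2)
      ≤ M.δmin + (M.δ i - M.δmin) * (o₁ i + 1/2) := by
    have := M.δ_ge i
    nlinarith
  have hinv : (M.δmin + (M.δ i - M.δmin) * (o₁ i + 1/2))⁻¹
      ≤ (M.δmin + (M.δ i - M.δmin) * (o₀ i + 1/2))⁻¹ :=
    one_div (M.δmin + (M.δ i - M.δmin) * (o₀ i + 1/2)) ▸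
      (inv_le_inv₀ hd1 hd0).mpr hdle
  exact mul_le_mul hinv hb hb1 (inv_nonneg.mpr hd0.le)

end RatioAux

/-- Proposition 1, part 1, monotonicity of the Opinion-Dependent
Reproduction Number: if `o(t₀) ≤ o(t₁)` entrywise then `R^o_{t₀} ≥ R^o_{t₁}`,
and conversely if `o(t₀) ≥ o(t₁)` entrywise then `R^o_{t₀} ≤ R^o_{t₁}`. -/
theorem Rnum_monotone {n : ℕ} (M : EpiOpModel n) (o₀ o₁ : Fin n → ℝ)
    (h₀ : ∀ i, o₀ i ∈ Set.Icc (-(1/2) : ℝ) (1/2))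
    (h₁ : ∀ i, o₁ i ∈ Set.Icc (-(1/2) : ℝ) (1/2)) :
    ((∀ i, o₀ i ≤ o₁ i) → M.Rnum o₁ ≤ M.Rnum o₀) ∧
    ((∀ i, o₁ i ≤ o₀ i) → M.Rnum o₀ ≤ M.Rnum o₁) := by
  constructor
  · intro hle
    exact SpecRadAux.specRad_le_specRad (ratio_nonneg M o₁ h₁)
      (ratio_nonneg M o₀ h₀) (ratio_mono M o₀ o₁ h₀ h₁ hle)
  · intro hle
    exact SpecRadAux.specRad_le_specRad (ratio_nonneg M o₀ h₀)
      (ratio_nonneg M o₁ h₁) (ratio_mono M o₁ o₀ h₁ h₀ hle)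
end
end

section
/- Bounds on the Opinion-Dependent Reproduction Number: for every opinion vector o(t) ∈ [−0.5, 0.5]^n, one has R_min ≤ R^o_t ≤ R_max, where R^o_t = ρ(D(o(t))^{−1} B(o(t))), R_min = ρ(D^{−1} B_min), and R_max = ρ(D_min^{−1} B). -/
open Matrix Filter Set

noncomputable section

section RnumAux

open scoped ENNReal NNReal

attribute [local instance] Matrix.linftyOpNormedRing Matrix.linftyOpNormedAlgebra
  Matrix.linftyOpNormedSpace

lemma specRad_nonneg' {m : Type*} [Fintype m] [DecidableEq m] (A : Matrix m m ℝ) :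
    0 ≤ specRad A := by
  apply Real.sSup_nonneg
  rintro x ⟨z, hz, rfl⟩
  positivity

lemma sR_eq' {m : Type*} [Fintype m] [DecidableEq m] (A : Matrix m m ℝ) :
    spectralRadius ℂ (A.map (algebraMap ℝ ℂ)) = ENNReal.ofReal (specRad A) := by
  set Ac := A.map (algebraMap ℝ ℂ)
  have hfin : (spectrum ℂ Ac).Finite := Matrix.finite_spectrum Ac
  have hbdd : BddAbove ((fun z => ‖z‖) '' spectrum ℂ Ac) :=
    (hfin.image _).bddAbove
  apply le_antisymm
  · rw [spectralRadius]
    refine iSup₂_le fun z hz => ?_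
    have h1 : ‖z‖ ≤ specRad A := le_csSup hbdd ⟨z, hz, rfl⟩
    calc (‖z‖₊ : ℝ≥0∞) = ENNReal.ofReal ‖z‖ := by
          exact (ofReal_norm z).symm
      _ ≤ _ := ENNReal.ofReal_le_ofReal h1
  · rcases Set.eq_empty_or_nonempty (spectrum ℂ Ac) with h | h
    · have : specRad A = 0 := by
        simp only [specRad]
        rw [show A.map (algebraMap ℝ ℂ) = Ac from rfl, h]
        simp [Real.sSup_empty]
      simp [this]
    · have hSne : ((fun z => ‖z‖) '' spectrum ℂ Ac).Nonempty := h.image _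
      obtain ⟨z, hz, hze⟩ := hSne.csSup_mem (hfin.image _)
      calc ENNReal.ofReal (specRad A) = (‖z‖₊ : ℝ≥0∞) := by
            rw [specRad, show A.map (algebraMap ℝ ℂ) = Ac from rfl, ← hze]
            exact ofReal_norm z
        _ ≤ _ := le_iSup₂ (f := fun k (_ : k ∈ spectrum ℂ Ac) => (‖k‖₊ : ℝ≥0∞)) z hz

lemma entry_pow_nonneg' {n : ℕ} {A : Matrix (Fin n) (Fin n) ℝ}
    (hA : ∀ i j, 0 ≤ A i j) : ∀ (k : ℕ) (i j), 0 ≤ (A ^ k) i j := by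
  intro k
  induction k with
  | zero =>
    intro i j
    rw [pow_zero, Matrix.one_apply]
    split <;> norm_num
  | succ k ih =>
    intro i j
    rw [pow_succ, Matrix.mul_apply]
    exact Finset.sum_nonneg fun l _ => mul_nonneg (ih i l) (hA l j)

lemma entry_pow_le' {n : ℕ} {A B : Matrix (Fin n) (Fin n) ℝ}
    (hA : ∀ i j, 0 ≤ A i j) (hAB : ∀ i j, A i j ≤ B i j) :
    ∀ (k : ℕ) (i j), (A ^ k) i j ≤ (B ^ k) i j := by
  have hB : ∀ i j, 0 ≤ B i j := fun i j => (hA i j).trans (hAB i j)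
  intro k
  induction k with
  | zero => intro i j; rw [pow_zero, pow_zero]
  | succ k ih =>
    intro i j
    rw [pow_succ, pow_succ, Matrix.mul_apply, Matrix.mul_apply]
    exact Finset.sum_le_sum fun l _ =>
      mul_le_mul (ih i l) (hAB l j) (hA l j) (entry_pow_nonneg' hB k i l)

lemma specRad_mono' {n : ℕ} {A B : Matrix (Fin n) (Fin n) ℝ}
    (hA : ∀ i j, 0 ≤ A i j) (hAB : ∀ i j, A i j ≤ B i j) :
    specRad A ≤ specRad B := by
  set f := algebraMap ℝ ℂ
  have hpow : ∀ (M : Matrix (Fin n) (Fin n) ℝ) (k : ℕ), (M.map f) ^ k = (M ^ k).map f := by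
    intro M k
    simpa [RingHom.mapMatrix_apply] using (map_pow (f.mapMatrix) M k).symm
  have hnrm : ∀ k : ℕ, ‖(A.map f) ^ k‖₊ ≤ ‖(B.map f) ^ k‖₊ := by
    intro k
    rw [hpow, hpow, Matrix.linfty_opNNNorm_def, Matrix.linfty_opNNNorm_def]
    refine Finset.sup_mono_fun fun i _ => Finset.sum_le_sum fun j _ => ?_
    have h1 := entry_pow_nonneg' hA k i j
    have h2 := entry_pow_le' hA hAB k i j
    simp only [Matrix.map_apply]
    have hre : ‖((A ^ k) i j : ℝ)‖ ≤ ‖((B ^ k) i j : ℝ)‖ := by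
      rw [Real.norm_eq_abs, Real.norm_eq_abs, abs_of_nonneg h1,
        abs_of_nonneg (h1.trans h2)]
      exact h2
    have : ‖f ((A ^ k) i j)‖ ≤ ‖f ((B ^ k) i j)‖ := by
      simpa [f, Complex.norm_real] using hre
    exact_mod_cast this
  have hg1 := spectrum.pow_nnnorm_pow_one_div_tendsto_nhds_spectralRadius (A.map f)
  have hg2 := spectrum.pow_nnnorm_pow_one_div_tendsto_nhds_spectralRadius (B.map f)
  have hle : spectralRadius ℂ (A.map f) ≤ spectralRadius ℂ (B.map f) :=
    le_of_tendsto_of_tendsto' hg1 hg2 fun k =>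
      ENNReal.rpow_le_rpow (by exact_mod_cast hnrm k) (by positivity)
  rw [sR_eq', sR_eq'] at hle
  exact (ENNReal.ofReal_le_ofReal_iff (specRad_nonneg' B)).mp hle

lemma diag_inv_mul_apply' {n : ℕ} (v : Fin n → ℝ) (hv : ∀ i, v i ≠ 0)
    (N : Matrix (Fin n) (Fin n) ℝ) (i j : Fin n) :
    ((Matrix.diagonal v)⁻¹ * N) i j = (v i)⁻¹ * N i j := by
  have hinv : (Matrix.diagonal v)⁻¹ = Matrix.diagonal (fun i => (v i)⁻¹) := by
    apply Matrix.inv_eq_left_inv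
    rw [Matrix.diagonal_mul_diagonal]
    have : (fun i => (v i)⁻¹ * v i) = fun _ => (1 : ℝ) :=
      funext fun i => inv_mul_cancel₀ (hv i)
    rw [this, Matrix.diagonal_one]
  rw [hinv, Matrix.diagonal_mul]

end RnumAux

/-- Proposition 1, part 2, bounds on the Opinion-Dependent
Reproduction Number: for every `o ∈ [−0.5, 0.5]^n`,
`R_min ≤ R^o ≤ R_max`, where `R_min = ρ(D⁻¹ B_min)` and
`R_max = ρ(D_min⁻¹ B)`. -/
theorem Rnum_bounds {n : ℕ} (M : EpiOpModel n) (o : Fin n → ℝ)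
    (ho : ∀ i, o i ∈ Set.Icc (-(1/2) : ℝ) (1/2)) :
    M.Rmin ≤ M.Rnum o ∧ M.Rnum o ≤ M.Rmax := by
  have hB0 : ∀ i j, 0 ≤ M.B i j := by
    intro i j
    rcases M.Atil_01 i j with h | h
    · rw [M.B_off i j h]
    · exact le_of_lt (lt_of_lt_of_le M.βmin_pos (M.B_edge i j h))
  have hBmin0 : ∀ i j, 0 ≤ M.Bmin i j := by
    intro i j
    rcases M.Atil_01 i j with h | h <;>
      simp [EpiOpModel.Bmin, h, le_of_lt M.βmin_pos]
  have hBminB : ∀ i j, M.Bmin i j ≤ M.B i j := by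
    intro i j
    rcases M.Atil_01 i j with h | h
    · simp [EpiOpModel.Bmin, h, M.B_off i j h]
    · simpa [EpiOpModel.Bmin, h] using M.B_edge i j h
  have ht0 : ∀ i, 0 ≤ o i + 1/2 := fun i => by have := (ho i).1; linarith
  have ht1 : ∀ i, o i + 1/2 ≤ 1 := fun i => by have := (ho i).2; linarith
  set d : Fin n → ℝ := fun i => M.δmin + (M.δ i - M.δmin) * (o i + 1/2) with hdd
  have hδδ : ∀ i, 0 ≤ M.δ i - M.δmin := fun i => by have := M.δ_ge i; linarith
  have hd1 : ∀ i, M.δmin ≤ d i := fun i => by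
    have := mul_nonneg (hδδ i) (ht0 i); simp only [hdd]; linarith
  have hd2 : ∀ i, d i ≤ M.δ i := fun i => by
    have h1 : (M.δ i - M.δmin) * (o i + 1/2) ≤ (M.δ i - M.δmin) * 1 :=
      mul_le_mul_of_nonneg_left (ht1 i) (hδδ i)
    simp only [hdd]; linarith
  have hd0 : ∀ i, 0 < d i := fun i => lt_of_lt_of_le M.δmin_pos (hd1 i)
  have hδ0 : ∀ i, 0 < M.δ i := fun i => lt_of_lt_of_le M.δmin_pos (M.δ_ge i)
  have hBo1 : ∀ i j, M.Bmin i j ≤ M.Bmat o i j := by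
    intro i j
    show M.Bmin i j ≤ M.B i j - (o i + 1/2) * (M.B i j - M.Bmin i j)
    have h1 : (o i + 1/2) * (M.B i j - M.Bmin i j) ≤ 1 * (M.B i j - M.Bmin i j) :=
      mul_le_mul_of_nonneg_right (ht1 i) (by have := hBminB i j; linarith)
    linarith
  have hBo2 : ∀ i j, M.Bmat o i j ≤ M.B i j := by
    intro i j
    show M.B i j - (o i + 1/2) * (M.B i j - M.Bmin i j) ≤ M.B i j
    have := mul_nonneg (ht0 i) (by have := hBminB i j; linarith : 0 ≤ M.B i j - M.Bmin i j)
    linarith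
  have hBo0 : ∀ i j, 0 ≤ M.Bmat o i j := fun i j => (hBmin0 i j).trans (hBo1 i j)
  have e1 : ∀ i j, (M.Dmax⁻¹ * M.Bmin) i j = (M.δ i)⁻¹ * M.Bmin i j := fun i j =>
    diag_inv_mul_apply' M.δ (fun i => (hδ0 i).ne') M.Bmin i j
  have e2 : ∀ i j, ((M.Dmat o)⁻¹ * M.Bmat o) i j = (d i)⁻¹ * M.Bmat o i j := fun i j =>
    diag_inv_mul_apply' d (fun i => (hd0 i).ne') (M.Bmat o) i j
  have e3 : ∀ i j, (M.Dmin⁻¹ * M.B) i j = M.δmin⁻¹ * M.B i j := by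
    intro i j
    rw [EpiOpModel.Dmin, Matrix.smul_one_eq_diagonal]
    exact diag_inv_mul_apply' _ (fun _ => M.δmin_pos.ne') M.B i j
  constructor
  · apply specRad_mono'
    · intro i j
      rw [e1]
      exact mul_nonneg (inv_nonneg.mpr (hδ0 i).le) (hBmin0 i j)
    · intro i j
      rw [e1, e2]
      exact mul_le_mul (by
          rw [inv_le_inv₀ (hδ0 i) (hd0 i)]; exact hd2 i)
        (hBo1 i j) (hBmin0 i j) (inv_nonneg.mpr (hd0 i).le)
  · apply specRad_mono'
    · intro i j
      rw [e2]
      exact mul_nonneg (inv_nonneg.mpr (hd0 i).le) (hBo0 i j)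
    · intro i j
      rw [e2, e3]
      exact mul_le_mul (by
          rw [inv_le_inv₀ (hd0 i) M.δmin_pos]; exact hd1 i)
        (hBo2 i j) (hBo0 i j) (inv_nonneg.mpr M.δmin_pos.le)
end
end
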